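/- In the graph R_k(S_a, S_b), every vertex u not belonging to L has eccentricity e(u) ≥ 4. -/

import Mathlib

/-!
Statement 10: In the graph `R_k(S_a, S_b)`, every vertex `u` not belonging to
`L` has eccentricity `e(u) ≥ 4`.
-/

namespace RadGadget

/-- Vertices of the radius gadget graph `R_k`, `k = 2^m`. -/
inductive V (m : ℕ) : Type
  | L : Fin (2 ^ m) → V m
  | R : Fin (2 ^ m) → V m
  | lk : V m
  | lk1 : V m
  | rk : V m
  | rk1 : V m
  | F : Fin m → V m
  | T : Fin m → V m
  | F' : Fin m → V m
  | T' : Fin m → V m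
  | x1 : V m
  | x2 : V m
  | x3 : V m
  deriving DecidableEq, Fintype

open V

/-- One direction of the edge relation of `R_k`. -/
def rel (m : ℕ) : V m → V m → Prop
  | L _, lk => True
  | R _, rk => True
  | lk, lk1 => True
  | rk, rk1 => True
  | lk1, rk1 => True
  | F j, T' j' => j = j'
  | T j, F' j' => j = j'
  | F j, T j' => j = j'
  | F' j, T' j' => j = j'
  | L i, F j => Nat.testBit i.val j.val = false
  | L i, T j => Nat.testBit i.val j.val = true
  | R i, F' j => Nat.testBit i.val j.val = false
  | R i, T' j => Nat.testBit i.val j.val = true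
  | L _, x1 => True
  | x1, x2 => True
  | x2, x3 => True
  | _, _ => False

/-- The radius gadget graph `R_k`. -/
def G (m : ℕ) : SimpleGraph (V m) := SimpleGraph.fromRel (rel m)

/-- Extra edges depending on the input strings: `ℓ_i–ℓ_{k+1}` when `S_a(i) = 1`
and `r_i–r_{k+1}` when `S_b(i) = 1`. -/
def extraRel (m : ℕ) (Sa Sb : Fin (2 ^ m) → Bool) : V m → V m → Prop
  | L i, lk1 => Sa i = true
  | R i, rk1 => Sb i = true
  | _, _ => False

/-- The graph `R_k(S_a, S_b)`. -/
def GS (m : ℕ) (Sa Sb : Fin (2 ^ m) → Bool) : SimpleGraph (V m) :=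
  G m ⊔ SimpleGraph.fromRel (extraRel m Sa Sb)

instance (m : ℕ) : Nonempty (V m) := ⟨x1⟩

/-- The eccentricity `e(u) = max_v d(u,v)` in `R_k(S_a, S_b)`. -/
noncomputable def ecc (m : ℕ) (Sa Sb : Fin (2 ^ m) → Bool) (u : V m) : ℕ :=
  Finset.univ.sup fun v => (GS m Sa Sb).dist u v

/-- The radius `min_u e(u)` of `R_k(S_a, S_b)`. -/
noncomputable def radius (m : ℕ) (Sa Sb : Fin (2 ^ m) → Bool) : ℕ :=
  Finset.univ.inf' Finset.univ_nonempty fun u => ecc m Sa Sb u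

/-- Potential function: distance-to-`x3` lower-bound certificate. -/
def phi {m : ℕ} : V m → ℕ
  | L _ => 3
  | R _ => 6
  | lk => 4
  | lk1 => 4
  | rk => 6
  | rk1 => 5
  | F _ => 4
  | T _ => 4
  | F' _ => 5
  | T' _ => 5
  | x1 => 2
  | x2 => 1
  | x3 => 0

lemma rel_step {m : ℕ} {u v : V m} (h : rel m u v) :
    phi u ≤ phi v + 1 ∧ phi v ≤ phi u + 1 := by
  cases u <;> cases v <;> first | exact h.elim | (simp only [phi]; omega)

lemma extra_step {m : ℕ} {Sa Sb : Fin (2 ^ m) → Bool} {u v : V m}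
    (h : extraRel m Sa Sb u v) : phi u ≤ phi v + 1 ∧ phi v ≤ phi u + 1 := by
  cases u <;> cases v <;> first | exact h.elim | (simp only [phi]; omega)

lemma adj_step {m : ℕ} {Sa Sb : Fin (2 ^ m) → Bool} {u v : V m}
    (h : (GS m Sa Sb).Adj u v) : phi u ≤ phi v + 1 := by
  simp only [GS, G, SimpleGraph.sup_adj, SimpleGraph.fromRel_adj] at h
  rcases h with ⟨-, h | h⟩ | ⟨-, h | h⟩
  · exact (rel_step h).1
  · exact (rel_step h).2
  · exact (extra_step h).1
  · exact (extra_step h).2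

lemma walk_step {m : ℕ} {Sa Sb : Fin (2 ^ m) → Bool} {u v : V m}
    (w : (GS m Sa Sb).Walk u v) : phi u ≤ phi v + w.length := by
  induction w with
  | nil => simp
  | cons h p ih =>
      have := adj_step h
      simp only [SimpleGraph.Walk.length_cons]
      omega

lemma dist_ge {m : ℕ} {Sa Sb : Fin (2 ^ m) → Bool} {u v : V m}
    (hr : (GS m Sa Sb).Reachable u v) :
    phi u ≤ phi v + (GS m Sa Sb).dist u v := by
  obtain ⟨w, hw⟩ := hr.exists_walk_length_eq_dist
  simpa [hw] using walk_step w

lemma adjR {m : ℕ} {Sa Sb : Fin (2 ^ m) → Bool} {u v : V m}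
    (hne : u ≠ v) (h : rel m u v) : (GS m Sa Sb).Adj u v := by
  simp only [GS, G, SimpleGraph.sup_adj, SimpleGraph.fromRel_adj]
  exact Or.inl ⟨hne, Or.inl h⟩

/-- Every vertex is reachable to `L 0`. -/
lemma reach_L0 {m : ℕ} {Sa Sb : Fin (2 ^ m) → Bool} (u : V m) :
    (GS m Sa Sb).Reachable u (L ⟨0, Nat.two_pow_pos m⟩) := by
  set l0 : V m := L ⟨0, Nat.two_pow_pos m⟩ with hl0
  have hlk : (GS m Sa Sb).Reachable lk l0 :=
    ((adjR (fun h => by simp [hl0] at h) trivial :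
      (GS m Sa Sb).Adj l0 lk)).reachable.symm
  have hlk1 : (GS m Sa Sb).Reachable lk1 l0 :=
    ((adjR (fun h => by cases h) trivial :
      (GS m Sa Sb).Adj lk lk1)).reachable.symm.trans hlk
  have hrk1 : (GS m Sa Sb).Reachable rk1 l0 :=
    ((adjR (fun h => by cases h) trivial :
      (GS m Sa Sb).Adj lk1 rk1)).reachable.symm.trans hlk1
  have hrk : (GS m Sa Sb).Reachable rk l0 :=
    ((adjR (fun h => by cases h) trivial :
      (GS m Sa Sb).Adj rk rk1)).reachable.trans hrk1
  have hF : ∀ j : Fin m, (GS m Sa Sb).Reachable (F j) l0 := by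
    intro j
    exact ((adjR (fun h => by simp [hl0] at h) (Nat.zero_testBit j.val) :
      (GS m Sa Sb).Adj l0 (F j))).reachable.symm
  have hT : ∀ j : Fin m, (GS m Sa Sb).Reachable (T j) l0 := by
    intro j
    exact ((adjR (fun h => by cases h) rfl :
      (GS m Sa Sb).Adj (F j) (T j))).reachable.symm.trans (hF j)
  have hx1 : (GS m Sa Sb).Reachable x1 l0 :=
    ((adjR (fun h => by simp [hl0] at h) trivial :
      (GS m Sa Sb).Adj l0 x1)).reachable.symm
  cases u with
  | L i =>
      exact ((adjR (fun h => by cases h) trivial :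
        (GS m Sa Sb).Adj (L i) lk)).reachable.trans hlk
  | R i =>
      exact ((adjR (fun h => by cases h) trivial :
        (GS m Sa Sb).Adj (R i) rk)).reachable.trans hrk
  | lk => exact hlk
  | lk1 => exact hlk1
  | rk => exact hrk
  | rk1 => exact hrk1
  | F j => exact hF j
  | T j => exact hT j
  | F' j =>
      exact ((adjR (fun h => by cases h) rfl :
        (GS m Sa Sb).Adj (T j) (F' j))).reachable.symm.trans (hT j)
  | T' j =>
      exact ((adjR (fun h => by cases h) rfl :
        (GS m Sa Sb).Adj (F j) (T' j))).reachable.symm.trans (hF j)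
  | x1 => exact hx1
  | x2 =>
      exact ((adjR (fun h => by cases h) trivial :
        (GS m Sa Sb).Adj x1 x2)).reachable.symm.trans hx1
  | x3 =>
      exact (((adjR (fun h => by cases h) trivial :
        (GS m Sa Sb).Adj x2 x3)).reachable.symm.trans
        ((adjR (fun h => by cases h) trivial :
          (GS m Sa Sb).Adj x1 x2)).reachable.symm).trans hx1

lemma reach_all {m : ℕ} {Sa Sb : Fin (2 ^ m) → Bool} (u v : V m) :
    (GS m Sa Sb).Reachable u v :=
  (reach_L0 u).trans (reach_L0 v).symm

lemma ecc_ge_dist {m : ℕ} {Sa Sb : Fin (2 ^ m) → Bool} (u v : V m) :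
    (GS m Sa Sb).dist u v ≤ ecc m Sa Sb u :=
  Finset.le_sup (Finset.mem_univ v)

theorem statement10 (m : ℕ) (hm : 1 ≤ m) (Sa Sb : Fin (2 ^ m) → Bool) :
    ∀ u : V m, (∀ i : Fin (2 ^ m), u ≠ L i) → 4 ≤ ecc m Sa Sb u := by
  intro u hu
  -- two generic arguments, depending on whether `phi u ≥ 4` or `phi u ≤ 2`
  have far : ∀ u : V m, 4 ≤ phi u → 4 ≤ ecc m Sa Sb u := by
    intro u h4
    have hr : (GS m Sa Sb).Reachable u x3 := reach_all u x3
    have := dist_ge (Sa := Sa) (Sb := Sb) hr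
    have hx3 : phi (x3 : V m) = 0 := rfl
    rw [hx3] at this
    have hd : 4 ≤ (GS m Sa Sb).dist u x3 := by omega
    exact le_trans hd (ecc_ge_dist u x3)
  have near : ∀ u : V m, phi u ≤ 2 → 4 ≤ ecc m Sa Sb u := by
    intro u h2
    set r0 : V m := R ⟨0, Nat.two_pow_pos m⟩ with hr0
    have hr : (GS m Sa Sb).Reachable r0 u := reach_all r0 u
    have := dist_ge (Sa := Sa) (Sb := Sb) hr
    have hphir0 : phi r0 = 6 := rfl
    rw [hphir0] at this
    have hd : 4 ≤ (GS m Sa Sb).dist u r0 := by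
      rw [SimpleGraph.dist_comm]; omega
    exact le_trans hd (ecc_ge_dist u r0)
  cases u with
  | L i => exact absurd rfl (hu i)
  | R i => exact far _ (by simp [phi])
  | lk => exact far _ (by simp [phi])
  | lk1 => exact far _ (by simp [phi])
  | rk => exact far _ (by simp [phi])
  | rk1 => exact far _ (by simp [phi])
  | F j => exact far _ (by simp [phi])
  | T j => exact far _ (by simp [phi])
  | F' j => exact far _ (by simp [phi])
  | T' j => exact far _ (by simp [phi])
  | x1 => exact near _ (by simp [phi])
  | x2 => exact near _ (by simp [phi])
  | x3 => exact near _ (by simp [phi])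

end RadGadget
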